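/- If H ∈ M_2(Z_p[[π,X]]) satisfies H ≡ Id mod π (i.e., H − Id ∈ π·M_2(Z_p[[π,X]])) and H·P(X) = P(X)·φ(H), then H = Id. -/

import Mathlib

open PowerSeries Filter Finset

noncomputable section

variable (p : ℕ) [Fact p.Prime]

/-- Substitution of a power series `g` (with zero constant coefficient in all our uses)
into a power series `f`: the coefficient of degree `j` of `f(g)` only involves the
monomials of `f` of degree `≤ j`. -/
def psSubst {A : Type*} [CommRing A] (g f : PowerSeries A) : PowerSeries A :=
  PowerSeries.mk fun j => ∑ i ∈ Finset.range (j + 1),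
    PowerSeries.coeff (R := A) i f * PowerSeries.coeff (R := A) j (g ^ i)

/-- The endomorphism `φ` of `A[[π]]`, substituting `(1+π)^p - 1` for `π`. -/
def phiA (A : Type*) [CommRing A] : PowerSeries A → PowerSeries A :=
  psSubst ((1 + PowerSeries.X) ^ p - 1)

/-- The binomial coefficient `binom(c, n)` for `c ∈ ℤ_p`, computed in `ℚ_p`. -/
def binomC (c : ℤ_[p]) (n : ℕ) : ℚ_[p] :=
  Polynomial.eval (c : ℚ_[p]) (descPochhammer ℚ_[p] n) / (n.factorial : ℚ_[p])

/-- The binomial power series `(1+π)^c = ∑_{n≥0} binom(c,n) π^n` for `c ∈ ℤ_p`. -/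
def onePlusPiPow (c : ℤ_[p]) : PowerSeries ℚ_[p] := PowerSeries.mk (binomC p c)

/-- The endomorphism `γ_c` of `ℚ_p[[π]]`, substituting `(1+π)^c - 1` for `π`. -/
def gammaQ (c : ℤ_[p]) : PowerSeries ℚ_[p] → PowerSeries ℚ_[p] :=
  psSubst (onePlusPiPow p c - 1)

/-- The partial products `∏_{n=0}^{N} φ^{2n+1}(q)/p` (whose limit is `λ₊`). -/
def partialPlus (q : PowerSeries ℚ_[p]) (N : ℕ) : PowerSeries ℚ_[p] :=
  ∏ n ∈ Finset.range (N + 1), (p : ℚ_[p])⁻¹ • (phiA p ℚ_[p])^[2 * n + 1] q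

/-- The partial products `∏_{n=0}^{N} φ^{2n}(q)/p` (whose limit is `λ₋`). -/
def partialMinus (q : PowerSeries ℚ_[p]) (N : ℕ) : PowerSeries ℚ_[p] :=
  ∏ n ∈ Finset.range (N + 1), (p : ℚ_[p])⁻¹ • (phiA p ℚ_[p])^[2 * n] q

/-- Convergence in `ℚ_p[[π]]` for the topology of coefficientwise convergence. -/
def CoeffTendsto (F : ℕ → PowerSeries ℚ_[p]) (L : PowerSeries ℚ_[p]) : Prop :=
  ∀ d : ℕ, Filter.Tendsto (fun N => PowerSeries.coeff (R := ℚ_[p]) d (F N))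
    Filter.atTop (nhds (PowerSeries.coeff (R := ℚ_[p]) d L))

/-- A power series with `ℚ_p` coefficients has all its coefficients in `ℤ_p`. -/
def IntSeries (f : PowerSeries ℚ_[p]) : Prop := ∀ n, ‖PowerSeries.coeff (R := ℚ_[p]) n f‖ ≤ 1

/-- Membership in the ring `R` of series `∑ a_i π^i` with `v_p(a_i) + i/(p-1) ≥ 0`,
expressed via norms: `‖a_i‖ ≤ p^{i/(p-1)}`. -/
def memR (f : PowerSeries ℚ_[p]) : Prop :=
  ∀ i : ℕ, ‖PowerSeries.coeff (R := ℚ_[p]) i f‖ ≤ (p : ℝ) ^ ((i : ℝ) / ((p : ℝ) - 1))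

/-- The series `p^m λ₋^{k-1} λ₊^{-(k-1)}`, where `m = ⌊(k-2)/(p-1)⌋`. -/
def zFull (k : ℕ) (lamPlus lamMinus : PowerSeries ℚ_[p]) : PowerSeries ℚ_[p] :=
  (p : PowerSeries ℚ_[p]) ^ ((k - 2) / (p - 1)) * lamMinus ^ (k - 1) * lamPlus⁻¹ ^ (k - 1)

/-- The truncation `z = z_0 + z_1 π + ⋯ + z_{k-2} π^{k-2}` of `p^m λ₋^{k-1} λ₊^{-(k-1)}`. -/
def zSeries (k : ℕ) (lamPlus lamMinus : PowerSeries ℚ_[p]) : PowerSeries ℚ_[p] :=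
  PowerSeries.mk fun i =>
    if i ≤ k - 2 then PowerSeries.coeff (R := ℚ_[p]) i (zFull p k lamPlus lamMinus) else 0

/-- The two-variable power series ring `ℚ_p[[π, X]]`, realized as `(ℚ_p[[π]])[[X]]`:
the inner variable is `π` and the outer variable is `X`. -/
abbrev PS2 := PowerSeries (PowerSeries ℚ_[p])

/-- `φ` extended to `ℚ_p[[π, X]]`, acting as before on `π` and trivially on `X`. -/
def phi2 : PS2 p → PS2 p := fun F =>
  PowerSeries.mk fun n => phiA p ℚ_[p] (PowerSeries.coeff (R := (PowerSeries ℚ_[p])) n F)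

/-- `γ_c` extended to `ℚ_p[[π, X]]`, acting as before on `π` and trivially on `X`. -/
def gamma2 (c : ℤ_[p]) : PS2 p → PS2 p := fun F =>
  PowerSeries.mk fun n => gammaQ p c (PowerSeries.coeff (R := (PowerSeries ℚ_[p])) n F)

/-- A two-variable power series has all its coefficients in `ℤ_p`,
i.e. lies in `ℤ_p[[π, X]]`. -/
def IntSeries2 (F : PS2 p) : Prop :=
  ∀ n j, ‖PowerSeries.coeff (R := ℚ_[p]) j (PowerSeries.coeff (R := (PowerSeries ℚ_[p])) n F)‖ ≤ 1

/-- The element `π` of `ℚ_p[[π, X]]`. -/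
def piVar : PS2 p := PowerSeries.C (R := (PowerSeries ℚ_[p])) PowerSeries.X

/-- The matrix `P(X)` with rows `(0, -1)` and `(q^{k-1}, X·z)`. -/
def Pmat (k : ℕ) (q z : PowerSeries ℚ_[p]) : Matrix (Fin 2) (Fin 2) (PS2 p) :=
  !![0, -1;
     PowerSeries.C (R := (PowerSeries ℚ_[p])) (q ^ (k - 1)),
       PowerSeries.X * PowerSeries.C (R := (PowerSeries ℚ_[p])) z]

/-- A matrix has entries in `ℤ_p[[π, X]]`. -/
def IntMat (H : Matrix (Fin 2) (Fin 2) (PS2 p)) : Prop := ∀ i j, IntSeries2 p (H i j)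

/-- A matrix is `≡ Id mod π`, i.e. `H - Id ∈ π · M₂(ℤ_p[[π, X]])`. -/
def ModPiId (H : Matrix (Fin 2) (Fin 2) (PS2 p)) : Prop :=
  ∃ H' : Matrix (Fin 2) (Fin 2) (PS2 p), IntMat p H' ∧ H = 1 + piVar p • H'

/-- The conditions satisfied by the matrix `G_c(X)`:
entries in `ℤ_p[[π,X]]`, `G ≡ Id mod π`, and `P(X)·φ(G) = G·γ_c(P(X))`. -/
def IsGmat (k : ℕ) (q z : PowerSeries ℚ_[p]) (c : ℤ_[p])
    (G : Matrix (Fin 2) (Fin 2) (PS2 p)) : Prop :=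
  IntMat p G ∧ ModPiId p G ∧
    Pmat p k q z * G.map (phi2 p) = G * (Pmat p k q z).map (gamma2 p c)

/-- The matrix `P₀` with rows `(0, -1)` and `(p^{k-1}, p^m X)`, `m = ⌊(k-2)/(p-1)⌋`. -/
def P0mat (k : ℕ) : Matrix (Fin 2) (Fin 2) (PowerSeries ℤ_[p]) :=
  !![0, -1;
     (p : PowerSeries ℤ_[p]) ^ (k - 1),
       (p : PowerSeries ℤ_[p]) ^ ((k - 2) / (p - 1)) * PowerSeries.X]

section Efield

variable (E : Type*) [NormedField E] [NormedAlgebra ℚ_[p] E] [IsUltrametricDist E]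

/-- The ring of integers `O_E` of `E`: the elements of norm at most `1`. -/
def ringOfInt : Subring E where
  carrier := {x : E | ‖x‖ ≤ 1}
  zero_mem' := by simp
  one_mem' := by simp
  add_mem' {a b} ha hb := le_trans (IsUltrametricDist.norm_add_le_max a b) (max_le ha hb)
  neg_mem' {a} ha := by simpa using ha
  mul_mem' {a b} ha hb := by
    have h := norm_mul a b
    simp only [Set.mem_setOf_eq] at *
    nlinarith [norm_nonneg a, norm_nonneg b]

/-- Evaluation `ev_α : ℚ_p[[π, X]] → E[[π]]` substituting `α` for `X`. -/
def evalX (α : E) (F : PS2 p) : PowerSeries E :=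
  PowerSeries.mk fun j =>
    ∑' n : ℕ, algebraMap ℚ_[p] E
      (PowerSeries.coeff (R := ℚ_[p]) j (PowerSeries.coeff (R := (PowerSeries ℚ_[p])) n F)) * α ^ n

/-- `γ_c` on `E[[π]]`: substitution of `(1+π)^c - 1` for `π` (coefficients mapped to `E`). -/
def gammaE (c : ℤ_[p]) : PowerSeries E → PowerSeries E :=
  psSubst ((onePlusPiPow p c).map (algebraMap ℚ_[p] E) - 1)

end Efield

end


section Statement10Aux

variable {p : ℕ} [Fact p.Prime]

private lemma aux_coeff_mul_low {A : Type*} [CommRing A] (N : ℕ) (f g : PowerSeries A)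
    (hf : ∀ j < N, PowerSeries.coeff (R := A) j f = 0) :
    PowerSeries.coeff (R := A) N (f * g)
      = PowerSeries.coeff (R := A) N f * PowerSeries.constantCoeff (R := A) g := by
  rw [PowerSeries.coeff_mul, Finset.sum_eq_single (N, 0)]
  · simp
  · rintro ⟨x, y⟩ hxy hne
    rw [Finset.HasAntidiagonal.mem_antidiagonal] at hxy
    have hx : x < N := by
      by_contra h
      push_neg at h
      have hxN : x = N := le_antisymm (by omega) h
      apply hne; subst hxN
      have : y = 0 := by omega
      simp [this]
    rw [hf x hx, zero_mul]
  · intro h; exact absurd (Finset.HasAntidiagonal.mem_antidiagonal.mpr (by simp)) h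

private lemma aux_coeff_phiA_low (N : ℕ) (f : PowerSeries ℚ_[p])
    (hf : ∀ i < N, PowerSeries.coeff (R := ℚ_[p]) i f = 0) (j : ℕ) (hj : j < N) :
    PowerSeries.coeff (R := ℚ_[p]) j (phiA p ℚ_[p] f) = 0 := by
  simp only [phiA, psSubst, PowerSeries.coeff_mk]
  refine Finset.sum_eq_zero fun i hi => ?_
  rw [hf i (lt_of_le_of_lt (Nat.lt_succ_iff.mp (Finset.mem_range.mp hi)) hj), zero_mul]

private lemma aux_constQ (q : PowerSeries ℚ_[p])
    (hq : PowerSeries.X * q = (1 + PowerSeries.X) ^ p - 1) :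
    PowerSeries.constantCoeff (R := ℚ_[p]) q = (p : ℚ_[p]) := by
  have h1 : PowerSeries.coeff (R := ℚ_[p]) 1 (PowerSeries.X * q)
      = PowerSeries.constantCoeff (R := ℚ_[p]) q := by
    rw [PowerSeries.coeff_succ_X_mul]
    simp [PowerSeries.coeff_zero_eq_constantCoeff]
  rw [hq] at h1
  rw [← h1]
  have h2 : ∀ n : ℕ, PowerSeries.coeff (R := ℚ_[p]) 1 ((1 + PowerSeries.X) ^ n) = n := by
    intro n
    induction n with
    | zero => simp
    | succ m ih =>
      rw [pow_succ, PowerSeries.coeff_mul, Finset.Nat.sum_antidiagonal_eq_sum_range_succ_mk]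
      simp [ih, Finset.sum_range_succ, map_pow, add_comm]
  simp [h2 p]

private lemma aux_coeff_phiA_top (N : ℕ) (q f : PowerSeries ℚ_[p])
    (hq : PowerSeries.X * q = (1 + PowerSeries.X) ^ p - 1)
    (hf : ∀ i < N, PowerSeries.coeff (R := ℚ_[p]) i f = 0) :
    PowerSeries.coeff (R := ℚ_[p]) N (phiA p ℚ_[p] f)
      = (p : ℚ_[p]) ^ N * PowerSeries.coeff (R := ℚ_[p]) N f := by
  simp only [phiA, psSubst, PowerSeries.coeff_mk]
  rw [Finset.sum_eq_single N]
  · have hg : ((1 + PowerSeries.X) ^ p - 1 : PowerSeries ℚ_[p]) ^ N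
        = PowerSeries.X ^ N * q ^ N := by rw [← hq, mul_pow]
    rw [hg]
    have h0 : PowerSeries.coeff (R := ℚ_[p]) (0 + N) (PowerSeries.X ^ N * q ^ N)
        = PowerSeries.coeff (R := ℚ_[p]) 0 (q ^ N) := PowerSeries.coeff_X_pow_mul (q ^ N) N 0
    rw [zero_add] at h0
    rw [h0]
    simp [PowerSeries.coeff_zero_eq_constantCoeff, map_pow, aux_constQ q hq, mul_comm]
  · intro i hi hne
    have : i < N := by
      have := Finset.mem_range.mp hi; omega
    rw [hf i this, zero_mul]
  · intro h
    exact absurd (Finset.mem_range.mpr (by omega)) h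

private lemma phiA_add (f g : PowerSeries ℚ_[p]) :
    phiA p ℚ_[p] (f + g) = phiA p ℚ_[p] f + phiA p ℚ_[p] g := by
  ext j
  simp [phiA, psSubst, add_mul, Finset.sum_add_distrib]

private lemma phiA_one : phiA p ℚ_[p] 1 = 1 := by
  ext j
  simp only [phiA, psSubst, PowerSeries.coeff_mk, PowerSeries.coeff_one]
  rw [Finset.sum_eq_single 0]
  · simp
  · intro i hi hne; simp [hne]
  · intro h; exact absurd (Finset.mem_range.mpr (by omega)) h

private lemma phiA_zero : phiA p ℚ_[p] 0 = 0 := by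
  ext j; simp [phiA, psSubst]

private lemma phi2_add (F G : PS2 p) : phi2 p (F + G) = phi2 p F + phi2 p G := by
  ext n
  simp [phi2, phiA_add]

private lemma phi2_one : phi2 p 1 = 1 := by
  ext n
  simp only [phi2, PowerSeries.coeff_mk, PowerSeries.coeff_one]
  split_ifs with h
  · subst h
    simp [PowerSeries.coeff_zero_eq_constantCoeff, phiA_one]
  · simp [phiA_zero]

private lemma phi2_coeff (n : ℕ) (F : PS2 p) :
    PowerSeries.coeff (R := (PowerSeries ℚ_[p])) n (phi2 p F)
      = phiA p ℚ_[p] (PowerSeries.coeff (R := (PowerSeries ℚ_[p])) n F) := by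
  simp [phi2]

private lemma map_one_add_phi2 (D : Matrix (Fin 2) (Fin 2) (PS2 p)) :
    (1 + D).map (phi2 p) = 1 + D.map (phi2 p) := by
  ext i j
  simp only [Matrix.map_apply, Matrix.add_apply, phi2_add]
  congr 1
  by_cases h : i = j <;>
    simp [Matrix.one_apply, h, phi2_one, (by ext n; simp [phi2, phiA_zero] :
      phi2 p 0 = 0)]

private lemma aux_solve {t Q a b c d pb pc pd pdd : ℚ_[p]} (hQ : Q ≠ 0)
    (ht : 1 - t * t ≠ 0)
    (h1 : b * Q = -(t * c))
    (h2 : -a + pb = -(t * d))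
    (h3 : d * Q = Q * (t * a) + pc)
    (h4 : -c + pdd = Q * (t * b) + pd)
    (hpb : pb = 0) (hpc : pc = 0) (hpd : pd = 0) (hpdd : pdd = 0) :
    a = 0 ∧ b = 0 ∧ c = 0 ∧ d = 0 := by
  subst hpb hpc hpd hpdd
  rw [add_zero] at h2 h3 h4
  have h2' : a = t * d := by linear_combination -h2
  have hd : d = t * a := by
    have h : d * Q = (t * a) * Q := by linear_combination h3
    exact mul_right_cancel₀ hQ h
  have ha0 : a = 0 := by
    have hA : a * (1 - t * t) = 0 := by linear_combination h2' + t * hd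
    rcases mul_eq_zero.mp hA with h | h
    · exact h
    · exact absurd h ht
  have hd0 : d = 0 := by rw [hd, ha0, mul_zero]
  have hc : c = -(Q * (t * b)) := by linear_combination -h4
  have hb0 : b = 0 := by
    have hB : b * Q * (1 - t * t) = 0 := by linear_combination h1 - t * hc
    rcases mul_eq_zero.mp hB with h | h
    · rcases mul_eq_zero.mp h with h' | h'
      · exact h'
      · exact absurd h' hQ
    · exact absurd h ht
  have hc0 : c = 0 := by rw [hc, hb0, mul_zero, mul_zero, neg_zero]
  exact ⟨ha0, hb0, hc0, hd0⟩

end Statement10Aux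

theorem statement10 (p : ℕ) [Fact p.Prime] (k : ℕ) (hk : 2 ≤ k)
    (q : PowerSeries ℚ_[p]) (hq : PowerSeries.X * q = (1 + PowerSeries.X) ^ p - 1)
    (lamPlus lamMinus : PowerSeries ℚ_[p])
    (hplus : CoeffTendsto p (partialPlus p q) lamPlus)
    (hminus : CoeffTendsto p (partialMinus p q) lamMinus)
    (H : Matrix (Fin 2) (Fin 2) (PS2 p))
    (hint : IntMat p H) (hmod : ModPiId p H)
    (heq : H * Pmat p k q (zSeries p k lamPlus lamMinus)
        = Pmat p k q (zSeries p k lamPlus lamMinus) * H.map (phi2 p)) :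
    H = 1 := by
  classical
  by_contra hne
  set z : PowerSeries ℚ_[p] := zSeries p k lamPlus lamMinus with hzdef
  set D : Matrix (Fin 2) (Fin 2) (PS2 p) := H - 1 with hDdef
  have hH : H = 1 + D := by rw [hDdef]; abel
  have key : D * Pmat p k q z = Pmat p k q z * D.map (phi2 p) := by
    have h2 := heq
    rw [hH, map_one_add_phi2, add_mul, one_mul, mul_add, mul_one] at h2
    exact add_left_cancel h2
  have keyij : ∀ i j, (D * Pmat p k q z) i j
      = (Pmat p k q z * D.map (phi2 p)) i j := fun i j => by rw [key]
  have e00 : D 0 1 * PowerSeries.C (R := (PowerSeries ℚ_[p])) (q ^ (k - 1))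
      = -phi2 p (D 1 0) := by
    simpa [Pmat, Matrix.mul_apply, Fin.sum_univ_two, Matrix.map_apply] using keyij 0 0
  have e01 : -D 0 0 + D 0 1 * (PowerSeries.X * PowerSeries.C (R := (PowerSeries ℚ_[p])) z)
      = -phi2 p (D 1 1) := by
    simpa [Pmat, Matrix.mul_apply, Fin.sum_univ_two, Matrix.map_apply] using keyij 0 1
  have e10 : D 1 1 * PowerSeries.C (R := (PowerSeries ℚ_[p])) (q ^ (k - 1))
      = PowerSeries.C (R := (PowerSeries ℚ_[p])) (q ^ (k - 1)) * phi2 p (D 0 0)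
        + PowerSeries.X * PowerSeries.C (R := (PowerSeries ℚ_[p])) z * phi2 p (D 1 0) := by
    simpa [Pmat, Matrix.mul_apply, Fin.sum_univ_two, Matrix.map_apply] using keyij 1 0
  have e11 : -D 1 0 + D 1 1 * (PowerSeries.X * PowerSeries.C (R := (PowerSeries ℚ_[p])) z)
      = PowerSeries.C (R := (PowerSeries ℚ_[p])) (q ^ (k - 1)) * phi2 p (D 0 1)
        + PowerSeries.X * PowerSeries.C (R := (PowerSeries ℚ_[p])) z * phi2 p (D 1 1) := by
    simpa [Pmat, Matrix.mul_apply, Fin.sum_univ_two, Matrix.map_apply] using keyij 1 1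
  have hex : ∃ m : ℕ, ∃ i j : Fin 2, ∃ n : ℕ,
      PowerSeries.coeff (R := ℚ_[p]) m (PowerSeries.coeff (R := (PowerSeries ℚ_[p])) n (D i j)) ≠ 0 := by
    by_contra hall
    push_neg at hall
    apply hne
    have hD0 : D = 0 := by
      ext i j n m
      simpa using hall m i j n
    rw [hDdef] at hD0
    rw [sub_eq_zero] at hD0
    exact hD0
  set N := Nat.find hex with hNdef
  have hNspec := Nat.find_spec hex
  have hlow : ∀ m < N, ∀ (i j : Fin 2) (n : ℕ),
      PowerSeries.coeff (R := ℚ_[p]) m (PowerSeries.coeff (R := (PowerSeries ℚ_[p])) n (D i j)) = 0 := by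
    intro m hm i j n
    by_contra hcon
    exact Nat.find_min hex hm ⟨i, j, n, hcon⟩
  have hN1 : 1 ≤ N := by
    by_contra hcon
    push_neg at hcon
    have hN0 : N = 0 := by omega
    obtain ⟨H', hH'int, hH'eq⟩ := hmod
    obtain ⟨i, j, n, hc⟩ := hNspec
    rw [← hNdef, hN0] at hc
    apply hc
    have hDij : D i j = PowerSeries.C (R := (PowerSeries ℚ_[p])) PowerSeries.X * H' i j := by
      rw [hDdef, hH'eq]
      simp [Matrix.sub_apply, Matrix.add_apply, Matrix.smul_apply, smul_eq_mul, piVar]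
    rw [hDij, PowerSeries.coeff_C_mul]
    exact PowerSeries.coeff_zero_X_mul _
  have hppr : p.Prime := Fact.out
  have hpne : (p : ℚ_[p]) ≠ 0 := Nat.cast_ne_zero.mpr hppr.ne_zero
  set t : ℚ_[p] := (p : ℚ_[p]) ^ N with htdef
  set Qc : ℚ_[p] := PowerSeries.constantCoeff (R := ℚ_[p]) (q ^ (k - 1)) with hQdef
  have hQ0 : Qc ≠ 0 := by
    rw [hQdef, map_pow, aux_constQ q hq]
    exact pow_ne_zero _ hpne
  have ht2 : 1 - t * t ≠ 0 := by
    intro hcon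
    have h1 : t * t = 1 := by linear_combination -hcon
    have hp1 : 1 < (p : ℝ) := by exact_mod_cast hppr.one_lt
    have hnt : ‖t‖ < 1 := by
      rw [htdef, norm_pow, Padic.norm_p]
      exact pow_lt_one₀ (by positivity) (inv_lt_one_of_one_lt₀ hp1) (by omega)
    have hlt : ‖t * t‖ < 1 := by
      rw [norm_mul]
      nlinarith [norm_nonneg t]
    rw [h1, norm_one] at hlt
    exact lt_irrefl _ hlt
  set A : ℕ → Fin 2 → Fin 2 → ℚ_[p] := fun n i j =>
    PowerSeries.coeff (R := ℚ_[p]) N (PowerSeries.coeff (R := (PowerSeries ℚ_[p])) n (D i j)) with hAdef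
  have hlowf : ∀ (n : ℕ) (i j : Fin 2), ∀ m < N,
      PowerSeries.coeff (R := ℚ_[p]) m (PowerSeries.coeff (R := (PowerSeries ℚ_[p])) n (D i j)) = 0 :=
    fun n i j m hm => hlow m hm i j n
  have hmul : ∀ (n : ℕ) (i j : Fin 2) (g : PowerSeries ℚ_[p]),
      PowerSeries.coeff (R := ℚ_[p]) N (PowerSeries.coeff (R := (PowerSeries ℚ_[p])) n (D i j) * g)
        = A n i j * PowerSeries.constantCoeff (R := ℚ_[p]) g := by
    intro n i j g
    simp only [hAdef]
    exact aux_coeff_mul_low N _ g (hlowf n i j)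
  have hphiN : ∀ (n : ℕ) (i j : Fin 2),
      PowerSeries.coeff (R := ℚ_[p]) N
          (phiA p ℚ_[p] (PowerSeries.coeff (R := (PowerSeries ℚ_[p])) n (D i j)))
        = t * A n i j := by
    intro n i j
    simp only [hAdef, htdef]
    exact aux_coeff_phiA_top N q _ hq (hlowf n i j)
  have hgphi : ∀ (n : ℕ) (i j : Fin 2) (g : PowerSeries ℚ_[p]),
      PowerSeries.coeff (R := ℚ_[p]) N
          (g * phiA p ℚ_[p] (PowerSeries.coeff (R := (PowerSeries ℚ_[p])) n (D i j)))
        = PowerSeries.constantCoeff (R := ℚ_[p]) g * (t * A n i j) := by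
    intro n i j g
    rw [mul_comm g, aux_coeff_mul_low N _ g
        (fun m hm => aux_coeff_phiA_low N _ (hlowf n i j) m hm), hphiN, mul_comm]
  have s00 : ∀ n : ℕ, A n 0 1 * Qc = -(t * A n 1 0) := by
    intro n
    have h := congrArg (PowerSeries.coeff (R := (PowerSeries ℚ_[p])) n) e00
    rw [PowerSeries.coeff_mul_C, map_neg, phi2_coeff] at h
    have h2 := congrArg (PowerSeries.coeff (R := ℚ_[p]) N) h
    rw [hmul, map_neg, hphiN] at h2
    rw [hQdef]
    exact h2
  have s01_0 : -(A 0 0 0) + (0 : ℚ_[p]) = -(t * A 0 1 1) := by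
    have h := congrArg (PowerSeries.coeff (R := (PowerSeries ℚ_[p])) 0) e01
    rw [map_add, map_neg, mul_left_comm, PowerSeries.coeff_zero_X_mul, map_neg,
      phi2_coeff] at h
    have h2 := congrArg (PowerSeries.coeff (R := ℚ_[p]) N) h
    rw [map_add, map_neg, map_zero, map_neg, hphiN] at h2
    simp only [hAdef]
    exact h2
  have s01_s : ∀ n : ℕ, -(A (n + 1) 0 0) + A n 0 1 * PowerSeries.constantCoeff (R := ℚ_[p]) z
      = -(t * A (n + 1) 1 1) := by
    intro n
    have h := congrArg (PowerSeries.coeff (R := (PowerSeries ℚ_[p])) (n + 1)) e01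
    rw [map_add, map_neg, mul_left_comm, PowerSeries.coeff_succ_X_mul,
      PowerSeries.coeff_mul_C, map_neg, phi2_coeff] at h
    have h2 := congrArg (PowerSeries.coeff (R := ℚ_[p]) N) h
    rw [map_add, map_neg, hmul, map_neg, hphiN] at h2
    simp only [hAdef]
    exact h2
  have s10_0 : A 0 1 1 * Qc = Qc * (t * A 0 0 0) + (0 : ℚ_[p]) := by
    have h := congrArg (PowerSeries.coeff (R := (PowerSeries ℚ_[p])) 0) e10
    rw [map_add, PowerSeries.coeff_mul_C, PowerSeries.coeff_C_mul, phi2_coeff,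
      mul_assoc, PowerSeries.coeff_zero_X_mul] at h
    have h2 := congrArg (PowerSeries.coeff (R := ℚ_[p]) N) h
    rw [map_add, hmul, hgphi, map_zero] at h2
    rw [hQdef]
    exact h2
  have s10_s : ∀ n : ℕ, A (n + 1) 1 1 * Qc
      = Qc * (t * A (n + 1) 0 0)
        + PowerSeries.constantCoeff (R := ℚ_[p]) z * (t * A n 1 0) := by
    intro n
    have h := congrArg (PowerSeries.coeff (R := (PowerSeries ℚ_[p])) (n + 1)) e10
    rw [map_add, PowerSeries.coeff_mul_C, PowerSeries.coeff_C_mul, phi2_coeff,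
      mul_assoc, PowerSeries.coeff_succ_X_mul, PowerSeries.coeff_C_mul, phi2_coeff] at h
    have h2 := congrArg (PowerSeries.coeff (R := ℚ_[p]) N) h
    rw [map_add, hmul, hgphi, hgphi] at h2
    rw [hQdef]
    exact h2
  have s11_0 : -(A 0 1 0) + (0 : ℚ_[p]) = Qc * (t * A 0 0 1) + (0 : ℚ_[p]) := by
    have h := congrArg (PowerSeries.coeff (R := (PowerSeries ℚ_[p])) 0) e11
    rw [map_add, map_neg, mul_left_comm, PowerSeries.coeff_zero_X_mul, map_add,
      PowerSeries.coeff_C_mul, phi2_coeff, mul_assoc, PowerSeries.coeff_zero_X_mul] at h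
    have h2 := congrArg (PowerSeries.coeff (R := ℚ_[p]) N) h
    rw [map_add, map_neg, map_zero, map_add, hgphi, map_zero] at h2
    rw [hQdef]
    simp only [hAdef]
    exact h2
  have s11_s : ∀ n : ℕ, -(A (n + 1) 1 0) + A n 1 1 * PowerSeries.constantCoeff (R := ℚ_[p]) z
      = Qc * (t * A (n + 1) 0 1)
        + PowerSeries.constantCoeff (R := ℚ_[p]) z * (t * A n 1 1) := by
    intro n
    have h := congrArg (PowerSeries.coeff (R := (PowerSeries ℚ_[p])) (n + 1)) e11
    rw [map_add, map_neg, mul_left_comm, PowerSeries.coeff_succ_X_mul,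
      PowerSeries.coeff_mul_C, map_add, PowerSeries.coeff_C_mul, phi2_coeff,
      mul_assoc, PowerSeries.coeff_succ_X_mul, PowerSeries.coeff_C_mul, phi2_coeff] at h
    have h2 := congrArg (PowerSeries.coeff (R := ℚ_[p]) N) h
    rw [map_add, map_neg, hmul, map_add, hgphi, hgphi] at h2
    rw [hQdef]
    simp only [hAdef]
    exact h2
  have hall : ∀ n : ℕ, A n 0 0 = 0 ∧ A n 0 1 = 0 ∧ A n 1 0 = 0 ∧ A n 1 1 = 0 := by
    intro n
    induction n with
    | zero =>
      exact aux_solve hQ0 ht2 (s00 0) s01_0 s10_0 s11_0 rfl rfl rfl rfl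
    | succ m ih =>
      obtain ⟨ha, hb, hc, hd⟩ := ih
      refine aux_solve hQ0 ht2 (s00 (m + 1)) (s01_s m) (s10_s m) (s11_s m) ?_ ?_ ?_ ?_
      · rw [hb, zero_mul]
      · rw [hc, mul_zero, mul_zero]
      · rw [hd, mul_zero, mul_zero]
      · rw [hd, zero_mul]
  obtain ⟨i, j, n, hcon⟩ := hNspec
  apply hcon
  have h4 := hall n
  simp only [hAdef] at h4
  fin_cases i <;> fin_cases j
  exacts [h4.1, h4.2.1, h4.2.2.1, h4.2.2.2]
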